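/- Let n ≥ 2 and let v, X ∈ ℝⁿ with ‖v‖ = 1, the last coordinate of v positive, ⟨X, v⟩ = 0 and ‖X‖ < 1. If Q ∈ ℝⁿ satisfies ⟨v, Q⟩ = 0 and the first n − 1 coordinates of Q − ⟨Q, X⟩ • X all vanish, then Q = 0. (Hence, for each such v and X, the linear map sending Q ∈ {Q | ⟨v,Q⟩ = 0} to the first n − 1 coordinates of Q − ⟨Q, X⟩X is injective from the (n−1)-dimensional tangent space T_v S^{n−1} to ℝ^{n−1}, so it is an invertible linear transformation; this is the case v ∈ D of Lemma 3.6.) -/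

import Mathlib

open RealInnerProductSpace

/-- Lemma 3.6, case `v ∈ D`: if `‖X‖ < 1`, `⟪X, v⟫ = 0`, `‖v‖ = 1` with positive
last coordinate, and `Q ⊥ v` has the first `n − 1` coordinates of
`Q − ⟪Q, X⟫ • X` all vanishing, then `Q = 0`. -/
theorem kernel_trivial_of_norm_lt_one {n : ℕ} (hn : 2 ≤ n)
    (v X : EuclideanSpace ℝ (Fin n))
    (hv : ‖v‖ = 1) (hvlast : 0 < v ⟨n - 1, by omega⟩)
    (hXv : ⟪X, v⟫ = 0) (hX : ‖X‖ < 1)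
    (Q : EuclideanSpace ℝ (Fin n)) (hQv : ⟪v, Q⟫ = 0)
    (hQ : ∀ i : Fin n, (i : ℕ) < n - 1 → (Q - ⟪Q, X⟫ • X) i = 0) :
    Q = 0 := by
  set c := ⟪Q, X⟫ with hc
  set R : EuclideanSpace ℝ (Fin n) := Q - c • X with hRdef
  have hlastidx : n - 1 < n := by omega
  have hinner : ⟪R, v⟫ = 0 := by
    rw [hRdef, inner_sub_left, inner_smul_left, hXv, real_inner_comm v Q, hQv]
    simp
  have hsum : ∑ i : Fin n, R i * v i = 0 := by
    simpa [PiLp.inner_apply, mul_comm] using hinner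
  have hsingle : ∑ i : Fin n, R i * v i = R ⟨n - 1, hlastidx⟩ * v ⟨n - 1, hlastidx⟩ := by
    apply Finset.sum_eq_single
    · intro i _ hi
      have hne : (i : ℕ) ≠ n - 1 := fun h => hi (Fin.ext h)
      have hlt := i.isLt
      rw [hQ i (by omega)]
      ring
    · intro h
      exact absurd (Finset.mem_univ _) h
  have hRlast : R ⟨n - 1, hlastidx⟩ = 0 := by
    have := hsingle ▸ hsum
    exact (mul_eq_zero.mp this).resolve_right (ne_of_gt hvlast)
  have hR : R = 0 := by
    ext i
    by_cases hi : (i : ℕ) < n - 1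
    · exact hQ i hi
    · have : i = ⟨n - 1, hlastidx⟩ := Fin.ext (by simp only [Fin.val_mk]; have := i.isLt; omega)
      rw [this]
      exact hRlast
  have hQc : Q = c • X := by
    have := sub_eq_zero.mp hR
    exact this
  have hcc : c = c * ‖X‖ ^ 2 := by
    conv_lhs => rw [hc, hQc]
    rw [inner_smul_left, real_inner_self_eq_norm_sq]
    simp
  have hc0 : c = 0 := by
    have hX2 : ‖X‖ ^ 2 < 1 := by
      nlinarith [norm_nonneg X]
    nlinarith [hcc]
  rw [hQc, hc0, zero_smul]
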